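/- Every full-rank lattice L ⊆ ℝⁿ has a Korkine–Zolotarev basis: there exists a ℤ-basis (b_1, …, b_n) of L such that, writing (b'_1, …, b'_n) for its Gram–Schmidt orthogonalization with coefficients μ_{i,j} = ⟨b_i, b'_j⟩/⟨b'_j, b'_j⟩ and L_{i−1} for the sublattice generated by b_1, …, b_{i−1}: for every 1 ≤ i ≤ n, b'_i is a shortest nonzero vector of the quotient lattice L/L_{i−1} (the orthogonal projection of L onto the orthogonal complement of span(b_1, …, b_{i−1})), and |μ_{i,j}| ≤ 1/2 for all 1 ≤ j < i ≤ n. -/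

import Mathlib

open Metric Submodule
open scoped RealInnerProductSpace
noncomputable section

/-- The image of the set `A` under the orthogonal projection onto the orthogonal complement
of the real span of `S`. -/
def projPerp {n : ℕ} (S A : Set (EuclideanSpace ℝ (Fin n))) : Set (EuclideanSpace ℝ (Fin n)) :=
  (fun x => ((orthogonalProjection (Submodule.span ℝ S)ᗮ) x : EuclideanSpace ℝ (Fin n))) '' A

/-- The Gram–Schmidt orthogonalization of the sequence `b`. -/
def gramSchmidtVec {n : ℕ} (b : Fin n → EuclideanSpace ℝ (Fin n)) :
    Fin n → EuclideanSpace ℝ (Fin n) :=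
  @InnerProductSpace.gramSchmidt ℝ _ _ _ _ (Fin n) _ inferInstance (inferInstance : WellFoundedLT (Fin n)) b

section KZAux
open Finset
variable {n : ℕ}
local notation "E" => EuclideanSpace ℝ (Fin n)

lemma gs_def (b : Fin n → E) (i : Fin n) :
    gramSchmidtVec b i = b i - ∑ j ∈ Finset.Iio i, (orthogonalProjection (ℝ ∙ gramSchmidtVec b j) (b i) : E) := by
  rw [gramSchmidtVec]; exact InnerProductSpace.gramSchmidt_def (𝕜 := ℝ) b i

lemma gs_congr : ∀ (N : ℕ) (b b' : Fin n → E) (i : Fin n), (i : ℕ) < N →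
    (∀ j, j ≤ i → b j = b' j) → gramSchmidtVec b i = gramSchmidtVec b' i := by
  intro N
  induction N with
  | zero => exact fun b b' i hi => absurd hi (Nat.not_lt_zero _)
  | succ N ih =>
    intro b b' i hi h
    rw [gs_def, gs_def, h i le_rfl]
    congr 1
    refine Finset.sum_congr rfl fun j hj => ?_
    have hji : j < i := Finset.mem_Iio.mp hj
    rw [ih b b' j (lt_of_lt_of_le hji (Nat.lt_succ_iff.mp hi)) (fun l hl => h l (hl.trans hji.le))]

lemma gs_orth (b : Fin n → E) {i j : Fin n} (h : i ≠ j) :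
    ⟪gramSchmidtVec b i, gramSchmidtVec b j⟫ = 0 := by
  rw [gramSchmidtVec]; exact @InnerProductSpace.gramSchmidt_orthogonal ℝ _ _ _ _ (Fin n) _ inferInstance (inferInstance : WellFoundedLT (Fin n)) b _ _ h

lemma gs_inv_tri (b : Fin n → E) {i j : Fin n} (h : i < j) :
    ⟪gramSchmidtVec b j, b i⟫ = 0 := by
  rw [gramSchmidtVec]; exact @InnerProductSpace.gramSchmidt_inv_triangular ℝ _ _ _ _ (Fin n) _ inferInstance (inferInstance : WellFoundedLT (Fin n)) b _ _ h

lemma gs_span_Iio (b : Fin n → E) (i : Fin n) :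
    span ℝ (gramSchmidtVec b '' Set.Iio i) = span ℝ (b '' Set.Iio i) := by
  rw [gramSchmidtVec]; exact @InnerProductSpace.span_gramSchmidt_Iio ℝ _ _ _ _ (Fin n) _ inferInstance (inferInstance : WellFoundedLT (Fin n)) b i

lemma gs_sub_mem (b : Fin n → E) (i : Fin n) :
    b i - gramSchmidtVec b i ∈ span ℝ (b '' Set.Iio i) := by
  rw [← gs_span_Iio]
  rw [gs_def, sub_sub_cancel]
  refine Submodule.sum_mem _ fun j hj => ?_
  have hji : j < i := Finset.mem_Iio.mp hj
  have : (orthogonalProjection (ℝ ∙ gramSchmidtVec b j) (b i) : E) ∈ ℝ ∙ gramSchmidtVec b j :=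
    SetLike.coe_mem _
  exact span_mono (Set.singleton_subset_iff.mpr (Set.mem_image_of_mem _ (Set.mem_Iio.mpr hji))) this

lemma gs_mem_orthogonal (b : Fin n → E) (i : Fin n) :
    gramSchmidtVec b i ∈ (span ℝ (b '' Set.Iio i))ᗮ := by
  rw [← gs_span_Iio]
  intro u hu
  induction hu using Submodule.span_induction with
  | mem x hx =>
    obtain ⟨j, hj, rfl⟩ := hx
    exact gs_orth b (ne_of_lt hj)
  | zero => simp
  | add x y _ _ hx hy => rw [inner_add_left, hx, hy, add_zero]
  | smul c x _ hx => rw [inner_smul_left, hx, mul_zero]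

lemma gs_eq_proj (b : Fin n → E) (i : Fin n) :
    gramSchmidtVec b i =
      (orthogonalProjection (span ℝ (b '' Set.Iio i))ᗮ (b i) : E) := by
  set W := span ℝ (b '' Set.Iio i)
  have h1 : b i = (b i - gramSchmidtVec b i) + gramSchmidtVec b i := by abel
  rw [h1, map_add]
  have h2 : (orthogonalProjection Wᗮ (b i - gramSchmidtVec b i)) = 0 :=
    Submodule.orthogonalProjectionOnto_apply_of_mem_orthogonal
      (Submodule.le_orthogonal_orthogonal W (gs_sub_mem b i))
  have h3 : orthogonalProjection Wᗮ (gramSchmidtVec b i) =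
      (⟨gramSchmidtVec b i, gs_mem_orthogonal b i⟩ : Wᗮ) :=
    orthogonalProjection_mem_subspace_eq_self (⟨gramSchmidtVec b i, gs_mem_orthogonal b i⟩ : Wᗮ)
  rw [h2, h3]
  simp
lemma latFinite (L : Submodule ℤ E) [DiscreteTopology L] (R : ℝ) :
    {x : E | x ∈ L ∧ ‖x‖ ≤ R}.Finite := by
  have hdisc : DiscreteTopology (L : Set E) := ‹DiscreteTopology L›
  have hclosed : IsClosed (L : Set E) := by
    have : DiscreteTopology L.toAddSubgroup := ‹DiscreteTopology L›
    exact AddSubgroup.isClosed_of_discrete (H := L.toAddSubgroup)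
  have heq : {x : E | x ∈ L ∧ ‖x‖ ≤ R} = (L : Set E) ∩ closedBall 0 R := by
    ext x; simp [mem_closedBall_zero_iff]
  rw [heq]
  have hcompact : IsCompact ((L : Set E) ∩ closedBall 0 R) :=
    (isCompact_closedBall 0 R).of_isClosed_subset
      (hclosed.inter Metric.isClosed_closedBall) Set.inter_subset_right
  exact hcompact.finite (isDiscrete_iff_discreteTopology.mpr (DiscreteTopology.of_subset hdisc Set.inter_subset_left))

lemma reduce_mod (b : Fin n → E) (s : Set (Fin n)) (v : E)
    (hv : v ∈ span ℝ (b '' s)) :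
    ∃ u ∈ span ℤ (b '' s), ‖v - u‖ ≤ ∑ j : Fin n, ‖b j‖ := by
  classical
  haveI : Fintype s := Fintype.ofFinite s
  rw [show b '' s = Set.range (fun j : s => b (j : Fin n)) from (Set.image_eq_range _ _)] at hv
  obtain ⟨c, hc⟩ := (mem_span_range_iff_exists_fun ℝ).mp hv
  refine ⟨∑ j : s, (⌊c j⌋ : ℝ) • b (j : Fin n), ?_, ?_⟩
  · refine Submodule.sum_mem _ fun j _ => ?_
    rw [Int.cast_smul_eq_zsmul]
    exact Submodule.smul_mem _ _ (subset_span (Set.mem_image_of_mem _ j.2))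
  · have hvu : v - ∑ j : s, (⌊c j⌋ : ℝ) • b (j : Fin n)
        = ∑ j : s, Int.fract (c j) • b (j : Fin n) := by
      rw [← hc, ← Finset.sum_sub_distrib]
      congr 1; ext j
      rw [← sub_smul]; rfl
    rw [hvu]
    calc ‖∑ j : s, Int.fract (c j) • b (j : Fin n)‖
        ≤ ∑ j : s, ‖Int.fract (c j) • b (j : Fin n)‖ := norm_sum_le _ _
      _ ≤ ∑ j : s, ‖b (j : Fin n)‖ := by
          refine Finset.sum_le_sum fun j _ => ?_
          rw [norm_smul, Real.norm_eq_abs,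
            abs_of_nonneg (Int.fract_nonneg _)]
          nlinarith [Int.fract_lt_one (c j), norm_nonneg (b (j : Fin n)), Int.fract_nonneg (c j)]
      _ = ∑ j ∈ s.toFinset, ‖b j‖ := Finset.sum_set_coe (f := fun j => ‖b j‖) s
      _ ≤ ∑ j : Fin n, ‖b j‖ :=
          Finset.sum_le_sum_of_subset_of_nonneg (Finset.subset_univ _)
            (fun j _ _ => norm_nonneg _)

lemma exists_shortest (L : Submodule ℤ E) [DiscreteTopology L] (W : Submodule ℝ E) (C : ℝ)
    (hred : ∀ v ∈ W, ∃ u, u ∈ L ∧ u ∈ W ∧ ‖v - u‖ ≤ C)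
    (x₀ : E) (hx₀L : x₀ ∈ L) (hx₀ : (orthogonalProjection Wᗮ x₀ : E) ≠ 0) :
    ∃ x ∈ L, (orthogonalProjection Wᗮ x : E) ≠ 0 ∧
      ∀ v ∈ L, (orthogonalProjection Wᗮ v : E) ≠ 0 →
        ‖(orthogonalProjection Wᗮ x : E)‖ ≤ ‖(orthogonalProjection Wᗮ v : E)‖ := by
  set π := orthogonalProjection Wᗮ with hπ
  have key : ∀ y ∈ L, ∃ y', y' ∈ L ∧ π y' = π y ∧ ‖y'‖ ≤ ‖(π y : E)‖ + C := by
    intro y hy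
    have hvW : y - (π y : E) ∈ W := by
      have := Submodule.sub_starProjection_mem_orthogonal (K := Wᗮ) y
      rw [Submodule.orthogonal_orthogonal] at this; exact this
    obtain ⟨u, huL, huW, hu⟩ := hred _ hvW
    refine ⟨y - u, Submodule.sub_mem _ hy huL, ?_, ?_⟩
    · rw [map_sub, Submodule.orthogonalProjectionOnto_apply_of_mem_orthogonal
        (Submodule.le_orthogonal_orthogonal W huW), sub_zero]
    · have : y - u = (π y : E) + ((y - (π y : E)) - u) := by abel
      rw [this]
      exact (norm_add_le _ _).trans (by gcongr)
  set A := {z : E | z ∈ L ∧ (π z : E) ≠ 0 ∧ ‖z‖ ≤ ‖(π x₀ : E)‖ + C}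
  obtain ⟨x₀', hx₀'L, hx₀'π, hx₀'n⟩ := key x₀ hx₀L
  have hx₀'A : x₀' ∈ A := ⟨hx₀'L, by rw [hx₀'π]; exact hx₀, hx₀'n⟩
  have hAfin : A.Finite := (latFinite L (‖(π x₀ : E)‖ + C)).subset
    (fun z hz => ⟨hz.1, hz.2.2⟩)
  obtain ⟨x, hxA, hxmin⟩ := Set.exists_min_image A (fun z => ‖(π z : E)‖) hAfin ⟨x₀', hx₀'A⟩
  refine ⟨x, hxA.1, hxA.2.1, fun v hvL hvπ => ?_⟩
  obtain ⟨v', hv'L, hv'π, hv'n⟩ := key v hvL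
  rcases le_or_gt ‖(π v : E)‖ ‖(π x₀ : E)‖ with h | h
  · have hv'A : v' ∈ A := ⟨hv'L, by rw [hv'π]; exact hvπ, hv'n.trans (by linarith)⟩
    have := hxmin v' hv'A
    rwa [hv'π] at this
  · exact le_trans (by simpa [hx₀'π] using hxmin x₀' hx₀'A) h.le

lemma inner_gs_self (b : Fin n → E) (i : Fin n) :
    ⟪gramSchmidtVec b i, b i⟫ = ⟪gramSchmidtVec b i, gramSchmidtVec b i⟫ := by
  have h1 : b i = (b i - gramSchmidtVec b i) + gramSchmidtVec b i := by abel
  rw [h1, inner_add_right,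
    real_inner_comm (b i - gramSchmidtVec b i) (gramSchmidtVec b i),
    gs_mem_orthogonal b i _ (gs_sub_mem b i), zero_add]

lemma li_of_gs_ne_zero (b : Fin n → E) (h : ∀ i, gramSchmidtVec b i ≠ 0) :
    LinearIndependent ℝ b := by
  rw [Fintype.linearIndependent_iff]
  intro g hg
  by_contra hcon
  push_neg at hcon
  classical
  set T := Finset.univ.filter (fun i => g i ≠ 0) with hT
  have hTne : T.Nonempty := by
    obtain ⟨i, hi⟩ := hcon
    exact ⟨i, by simp [hT, hi]⟩
  set i := T.max' hTne with hi
  have higs : g i ≠ 0 := by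
    have := T.max'_mem hTne
    simp only [hT, Finset.mem_filter] at this
    exact this.2
  have hinner : ⟪gramSchmidtVec b i, ∑ j, g j • b j⟫
      = g i * ⟪gramSchmidtVec b i, gramSchmidtVec b i⟫ := by
    rw [inner_sum]
    rw [Finset.sum_eq_single i]
    · rw [real_inner_smul_right, inner_gs_self]
    · intro j _ hji
      rcases lt_trichotomy j i with hlt | heq | hgt
      · rw [real_inner_smul_right, gs_inv_tri b hlt, mul_zero]
      · exact absurd heq hji
      · have hgj : g j = 0 := by
          by_contra hgj
          have : j ∈ T := by simp [hT, hgj]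
          exact absurd (T.le_max' j this) (not_le.mpr hgt)
        rw [hgj, zero_smul, inner_zero_right]
    · intro hi'; simp at hi'
  rw [hg, inner_zero_right] at hinner
  have hne : ⟪gramSchmidtVec b i, gramSchmidtVec b i⟫ ≠ 0 :=
    fun hc => h i (inner_self_eq_zero.mp hc)
  rcases mul_eq_zero.mp hinner.symm with h' | h'
  exacts [higs h', absurd h' hne]

lemma size_reduce (b : Fin n → E) (k : Fin n) :
    ∀ (t : ℕ), t ≤ (k : ℕ) → ∀ x : E, ∃ y : E,
      x - y ∈ span ℤ (b '' {j | (k : ℕ) - t ≤ (j : ℕ) ∧ (j : ℕ) < (k : ℕ)}) ∧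
      ∀ j : Fin n, (k : ℕ) - t ≤ (j : ℕ) → (j : ℕ) < (k : ℕ) →
        |⟪y, gramSchmidtVec b j⟫ / ⟪gramSchmidtVec b j, gramSchmidtVec b j⟫| ≤ 1/2 := by
  intro t
  induction t with
  | zero =>
    intro _ x
    exact ⟨x, by simp, fun j h1 h2 => absurd (lt_of_le_of_lt h1 h2) (lt_irrefl _)⟩
  | succ t ih =>
    intro ht x
    obtain ⟨y, hyspan, hy⟩ := ih (Nat.le_of_succ_le ht) x
    have hj₀n : (k : ℕ) - (t+1) < n := lt_of_le_of_lt (Nat.sub_le _ _) k.2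
    set j₀ : Fin n := ⟨(k : ℕ) - (t+1), hj₀n⟩ with hj₀
    have hj₀v : (j₀ : ℕ) = (k : ℕ) - (t+1) := rfl
    have hj₀k : (j₀ : ℕ) < (k : ℕ) := by omega
    set g := gramSchmidtVec b j₀ with hg
    set μ := ⟪y, g⟫ / ⟪g, g⟫ with hμ
    refine ⟨y - (round μ : ℝ) • b j₀, ?_, ?_⟩
    · have h1 : x - (y - (round μ : ℝ) • b j₀) = (x - y) + (round μ : ℝ) • b j₀ := by abel
      rw [h1]
      refine Submodule.add_mem _ (span_mono (Set.image_mono ?_) hyspan) ?_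
      · intro j hj
        simp only [Set.mem_setOf_eq] at hj ⊢
        omega
      · rw [Int.cast_smul_eq_zsmul]
        refine Submodule.smul_mem _ _ (subset_span (Set.mem_image_of_mem _ ?_))
        exact ⟨by omega, by simpa using hj₀k⟩
    · intro j h1 h2
      have hinner : ⟪y - (round μ : ℝ) • b j₀, gramSchmidtVec b j⟫
          = ⟪y, gramSchmidtVec b j⟫ - (round μ : ℝ) * ⟪b j₀, gramSchmidtVec b j⟫ := by
        rw [inner_sub_left, real_inner_smul_left]
      rcases eq_or_lt_of_le h1 with heq | hlt
      · have hjj₀ : j = j₀ := Fin.eq_of_val_eq (by omega)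
        rw [hjj₀] at hinner ⊢
        by_cases hgz : g = 0
        · rw [hinner, ← hg, hgz]
          simp
        · have hden : ⟪g, g⟫ ≠ 0 := fun hc => hgz (inner_self_eq_zero.mp hc)
          rw [hinner, ← hg]
          have hbg : ⟪b j₀, g⟫ = ⟪g, g⟫ := by
            rw [hg, real_inner_comm (gramSchmidtVec b j₀) (b j₀), inner_gs_self]
          rw [hbg]
          have heq2 : (⟪y, g⟫ - (round μ : ℝ) * ⟪g, g⟫) / ⟪g, g⟫ = μ - round μ := by
            rw [hμ, sub_div, mul_div_assoc, div_self hden, mul_one]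
          rw [heq2]
          exact abs_sub_round μ
      · have hj₀j : j₀ < j := by
          rw [Fin.lt_def]; omega
        rw [hinner, real_inner_comm (gramSchmidtVec b j) (b j₀), gs_inv_tri b hj₀j,
          mul_zero, sub_zero]
        exact hy j (by omega) h2

lemma main_aux (L : Submodule ℤ E) [DiscreteTopology L] (hL : IsZLattice ℝ L) :
    ∀ k : ℕ, k ≤ n → ∃ b : Fin n → E,
      (∀ j : Fin n, (j : ℕ) < k → b j ∈ L) ∧
      ((L : Set E) ∩ (span ℝ (b '' {j | (j : ℕ) < k}) : Set E)
        ⊆ (span ℤ (b '' {j | (j : ℕ) < k}) : Set E)) ∧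
      (∀ i : Fin n, (i : ℕ) < k →
        (gramSchmidtVec b i ∈ projPerp (b '' {j | j < i}) (L : Set E) ∧
         gramSchmidtVec b i ≠ 0 ∧
         ∀ w ∈ projPerp (b '' {j | j < i}) (L : Set E), w ≠ 0 → ‖gramSchmidtVec b i‖ ≤ ‖w‖) ∧
        (∀ j : Fin n, j < i →
          |⟪b i, gramSchmidtVec b j⟫ / ⟪gramSchmidtVec b j, gramSchmidtVec b j⟫| ≤ 1/2)) := by
  intro k
  induction k with
  | zero =>
    intro _
    refine ⟨fun _ => 0, by simp, ?_, by simp⟩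
    have h0 : {j : Fin n | (j : ℕ) < 0} = ∅ := by ext j; simp
    rw [h0]
    simp only [Set.image_empty, Submodule.span_empty]
    intro z hz
    simpa using hz.2
  | succ k ih =>
    intro hk1
    have hkn : k < n := hk1
    obtain ⟨b, hmem, hspan, hgood⟩ := ih (Nat.le_of_succ_le hk1)
    set kF : Fin n := ⟨k, hkn⟩ with hkF
    have hkFv : (kF : ℕ) = k := rfl
    set s : Set (Fin n) := {j : Fin n | (j : ℕ) < k} with hs
    set W := span ℝ (b '' s) with hW
    have hsIio : {j : Fin n | j < kF} = s := by
      ext j; simp only [hs, Set.mem_setOf_eq, Fin.lt_def, hkFv]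
    -- (a) existence of lattice vector with nonzero projection
    have hxex : ∃ x₀, x₀ ∈ L ∧ (orthogonalProjection Wᗮ x₀ : E) ≠ 0 := by
      by_contra hcon
      push_neg at hcon
      have hLsub : (L : Set E) ⊆ (Wᗮᗮ : Set E) := by
        intro v hv
        exact Submodule.orthogonalProjectionOnto_eq_zero_iff.mp
          (Submodule.coe_eq_zero.mp (hcon v hv))
      have hWoo : Wᗮᗮ = ⊤ := by
        rw [eq_top_iff, ← hL.span_top, Submodule.span_le]
        exact hLsub
      have hWtop : W = ⊤ := by rw [← Submodule.orthogonal_orthogonal W, hWoo]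
      classical
      have himg : b '' s = Set.range (fun l : Fin k => b ⟨l.1, lt_trans l.2 hkn⟩) := by
        ext v
        constructor
        · rintro ⟨j, hj, rfl⟩
          exact ⟨⟨j.1, hj⟩, rfl⟩
        · rintro ⟨l, rfl⟩
          exact ⟨⟨l.1, lt_trans l.2 hkn⟩, l.2, rfl⟩
      have hfin : Module.finrank ℝ W ≤ k := by
        rw [hW, himg]
        refine le_trans (finrank_span_le_card _) ?_
        rw [Set.toFinset_range]
        exact le_trans (Finset.card_image_le) (by simp)
      rw [hWtop] at hfin
      rw [finrank_top, finrank_euclideanSpace_fin] at hfin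
      omega
    -- (b) reduction property
    set C := ∑ j : Fin n, ‖b j‖ with hC
    have hsubL : span ℤ (b '' s) ≤ L := by
      rw [Submodule.span_le]
      rintro _ ⟨j, hj, rfl⟩
      exact hmem j hj
    have hsubW : ∀ u, u ∈ span ℤ (b '' s) → u ∈ W := by
      intro u hu
      have := Submodule.span_subset_span (R := ℤ) (S := ℝ) (M := E) (s := b '' s) hu
      simpa using this
    have hred : ∀ v ∈ W, ∃ u, u ∈ L ∧ u ∈ W ∧ ‖v - u‖ ≤ C := by
      intro v hv
      obtain ⟨u, huZ, hu⟩ := reduce_mod b s v hv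
      exact ⟨u, hsubL huZ, hsubW u huZ, hu⟩
    -- (c) shortest projected vector
    obtain ⟨x₀, hx₀L, hx₀⟩ := hxex
    obtain ⟨x, hxL, hxπ, hxmin⟩ := exists_shortest L W C hred x₀ hx₀L hx₀
    -- (d) size reduction
    obtain ⟨y, hyspan, hyμ⟩ := size_reduce b kF k le_rfl x
    have hset0 : {j : Fin n | (kF : ℕ) - k ≤ (j : ℕ) ∧ (j : ℕ) < (kF : ℕ)} = s := by
      ext j; simp only [hs, Set.mem_setOf_eq, Fin.lt_def, hkFv]; omega
    rw [hset0] at hyspan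
    have hyL : y ∈ L := by
      have : y = x - (x - y) := by abel
      rw [this]
      exact Submodule.sub_mem L hxL (hsubL hyspan)
    have hπy : (orthogonalProjection Wᗮ y : E) = (orthogonalProjection Wᗮ x : E) := by
      have h0 : orthogonalProjection Wᗮ (x - y) = 0 :=
        Submodule.orthogonalProjectionOnto_apply_of_mem_orthogonal
          (Submodule.le_orthogonal_orthogonal W (hsubW _ hyspan))
      have := map_sub (orthogonalProjection Wᗮ) x y
      rw [h0] at this
      have h2 : orthogonalProjection Wᗮ x = orthogonalProjection Wᗮ y := by
        have := this.symm
        rwa [sub_eq_zero] at this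
      rw [h2]
    -- the new family
    set b' : Fin n → E := Function.update b kF y with hb'
    have hb'j : ∀ j : Fin n, (j : ℕ) < k → b' j = b j := by
      intro j hj
      apply Function.update_of_ne
      intro hjk
      rw [hjk] at hj
      simp [hkF] at hj
    have hb'k : b' kF = y := Function.update_self _ _ _
    have hims : b' '' s = b '' s := Set.image_congr (fun j hj => hb'j j hj)
    have himIio : ∀ i : Fin n, (i : ℕ) ≤ k → b' '' {j | j < i} = b '' {j | j < i} := by
      intro i hi
      exact Set.image_congr (fun j hj => hb'j j (lt_of_lt_of_le hj hi))
    have hgs' : ∀ i : Fin n, (i : ℕ) < k → gramSchmidtVec b' i = gramSchmidtVec b i := by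
      intro i hi
      exact (gs_congr k b b' i hi (fun l hl => (hb'j l (lt_of_le_of_lt hl hi)).symm)).symm
    have hIiokF : (Set.Iio kF) = s := hsIio
    have hgs'k : gramSchmidtVec b' kF = (orthogonalProjection Wᗮ x : E) := by
      rw [gs_eq_proj b' kF, hIiokF, hims, hb'k, ← hW, hπy]
    refine ⟨b', ?_, ?_, ?_⟩
    · -- membership
      intro j hj
      rcases Nat.lt_or_ge (j : ℕ) k with h | h
      · rw [hb'j j h]; exact hmem j h
      · have : j = kF := Fin.eq_of_val_eq (by rw [hkFv]; omega)
        rw [this, hb'k]; exact hyL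
    · -- span condition
      have hs'ins : {j : Fin n | (j : ℕ) < k + 1} = insert kF s := by
        ext j
        simp only [Set.mem_setOf_eq, Set.mem_insert_iff, hs, Fin.ext_iff, hkF]
        omega
      have hs' : b' '' {j : Fin n | (j : ℕ) < k + 1} = insert y (b '' s) := by
        rw [hs'ins, Set.image_insert_eq, hb'k, hims]
      rw [hs']
      intro z hz
      obtain ⟨hzL, hzW⟩ := hz
      obtain ⟨c, w', hw', hzeq⟩ := Submodule.mem_span_insert.mp hzW
      by_cases hfr : Int.fract c = 0
      · have hcz : c = (⌊c⌋ : ℝ) := by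
          have := Int.self_sub_floor c
          rw [hfr] at this
          linarith
        have hw'L : w' ∈ L := by
          have hw'eq : w' = z - (⌊c⌋ : ℤ) • y := by
            rw [hzeq, ← Int.cast_smul_eq_zsmul ℝ, ← hcz]; abel
          rw [hw'eq]
          exact Submodule.sub_mem L hzL (Submodule.smul_mem L _ hyL)
        have hw'Z : w' ∈ span ℤ (b '' s) := hspan ⟨hw'L, hw'⟩
        exact Submodule.mem_span_insert.mpr
          ⟨⌊c⌋, w', hw'Z, by rw [hzeq, ← Int.cast_smul_eq_zsmul ℝ, ← hcz]⟩
      · exfalso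
        have hvL : z - (⌊c⌋ : ℝ) • y ∈ L := by
          rw [Int.cast_smul_eq_zsmul ℝ]
          exact Submodule.sub_mem L hzL (Submodule.smul_mem L _ hyL)
        have hπw' : orthogonalProjection Wᗮ w' = 0 :=
          Submodule.orthogonalProjectionOnto_apply_of_mem_orthogonal
            (Submodule.le_orthogonal_orthogonal W hw')
        have hπyx : orthogonalProjection Wᗮ y = orthogonalProjection Wᗮ x :=
          Subtype.coe_injective hπy
        have hπv' : orthogonalProjection Wᗮ (z - (⌊c⌋ : ℝ) • y)
            = Int.fract c • orthogonalProjection Wᗮ x := by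
          rw [map_sub, map_smul, hzeq, map_add, map_smul, hπw', add_zero, hπyx, ← sub_smul, Int.self_sub_floor]
        have hπv : (orthogonalProjection Wᗮ (z - (⌊c⌋ : ℝ) • y) : E)
            = Int.fract c • (orthogonalProjection Wᗮ x : E) := by
          rw [hπv']; rfl

        have hπvne : (orthogonalProjection Wᗮ (z - (⌊c⌋ : ℝ) • y) : E) ≠ 0 := by
          rw [hπv]; exact smul_ne_zero hfr hxπ
        have hmin := hxmin _ hvL hπvne
        rw [hπv, norm_smul, Real.norm_eq_abs, abs_of_nonneg (Int.fract_nonneg c)] at hmin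
        have h01 : Int.fract c < 1 := Int.fract_lt_one c
        have hfr0 : 0 < Int.fract c := lt_of_le_of_ne (Int.fract_nonneg c) (Ne.symm hfr)
        have hnx : 0 < ‖(orthogonalProjection Wᗮ x : E)‖ := norm_pos_iff.mpr hxπ
        nlinarith
    · -- the KZ conditions
      intro i hik
      rcases Nat.lt_or_ge (i : ℕ) k with hik' | hik'
      · have e1 : b' '' {j | j < i} = b '' {j | j < i} := himIio i hik'.le
        have e2 := hgs' i hik'
        obtain ⟨⟨g1, g2, g3⟩, g4⟩ := hgood i hik'
        refine ⟨⟨?_, ?_, ?_⟩, ?_⟩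
        · rw [e1, e2]; exact g1
        · rw [e2]; exact g2
        · intro w hw hwne
          rw [e2]
          rw [e1] at hw
          exact g3 w hw hwne
        · intro j hj
          have hjk : (j : ℕ) < k := lt_trans (Fin.lt_def.mp hj) hik'
          rw [hb'j i hik', hgs' j hjk]
          exact g4 j hj
      · have hi : i = kF := Fin.eq_of_val_eq (by rw [hkFv]; omega)
        subst hi
        have e1 : b' '' {j | j < kF} = b '' s := by
          rw [himIio kF (le_of_eq hkFv), hsIio]
        refine ⟨⟨?_, ?_, ?_⟩, ?_⟩
        · rw [e1, hgs'k]
          simp only [projPerp]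
          exact ⟨x, hxL, rfl⟩
        · rw [hgs'k]; exact hxπ
        · intro w hw hwne
          rw [e1] at hw
          simp only [projPerp] at hw
          obtain ⟨v, hvL, rfl⟩ := hw
          rw [hgs'k]
          exact hxmin v hvL hwne
        · intro j hj
          have hjk : (j : ℕ) < k := Fin.lt_def.mp hj
          rw [hb'k, hgs' j hjk]
          exact hyμ j (by omega) (by omega)


theorem exists_korkine_zolotarev_basis'
    (L : Submodule ℤ E) [DiscreteTopology L]
    (hL : IsZLattice ℝ L) :
    ∃ b : Fin n → E,
      Submodule.span ℤ (Set.range b) = L ∧ LinearIndependent ℝ b ∧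
      (∀ i : Fin n,
        gramSchmidtVec b i ∈ projPerp (b '' {j | j < i}) (L : Set E) ∧
        gramSchmidtVec b i ≠ 0 ∧
        ∀ w ∈ projPerp (b '' {j | j < i}) (L : Set E),
          w ≠ 0 → ‖gramSchmidtVec b i‖ ≤ ‖w‖) ∧
      (∀ i j : Fin n, j < i →
        |⟪b i, gramSchmidtVec b j⟫ / ⟪gramSchmidtVec b j, gramSchmidtVec b j⟫| ≤ 1 / 2) := by
  obtain ⟨b, hmem, hspan, hgood⟩ := main_aux L hL n le_rfl
  have hli : LinearIndependent ℝ b := li_of_gs_ne_zero b (fun i => ((hgood i i.2).1).2.1)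
  have huniv : {j : Fin n | (j : ℕ) < n} = Set.univ := by ext j; simp [j.2]
  have hrange : b '' {j : Fin n | (j : ℕ) < n} = Set.range b := by
    rw [huniv, Set.image_univ]
  have htop : span ℝ (Set.range b) = ⊤ :=
    hli.span_eq_top_of_card_eq_finrank' (by simp)
  refine ⟨b, ?_, hli, fun i => (hgood i i.2).1, fun i j hj => (hgood i i.2).2 j hj⟩
  apply le_antisymm
  · rw [Submodule.span_le]
    rintro _ ⟨j, rfl⟩
    exact hmem j j.2
  · intro z hz
    have hmem2 : z ∈ (span ℤ (b '' {j : Fin n | (j : ℕ) < n}) : Set E) := by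
      apply hspan
      refine ⟨hz, ?_⟩
      rw [hrange, htop]
      trivial
    rwa [hrange] at hmem2

end KZAux

/-- Every full-rank lattice `L ⊆ ℝⁿ` has a Korkine–Zolotarev basis: a ℤ-basis `b` of `L`
such that each Gram–Schmidt vector `b'_i` is a shortest nonzero vector of the projection of
`L` orthogonally to `span(b_1, …, b_{i−1})`, and all Gram–Schmidt coefficients `μ_{i,j}`
with `j < i` have absolute value at most `1/2`. -/
theorem exists_korkine_zolotarev_basis
    (n : ℕ) (L : Submodule ℤ (EuclideanSpace ℝ (Fin n))) [DiscreteTopology L]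
    (hL : IsZLattice ℝ L) :
    ∃ b : Fin n → EuclideanSpace ℝ (Fin n),
      Submodule.span ℤ (Set.range b) = L ∧ LinearIndependent ℝ b ∧
      (∀ i : Fin n,
        gramSchmidtVec b i ∈ projPerp (b '' {j | j < i}) (L : Set (EuclideanSpace ℝ (Fin n))) ∧
        gramSchmidtVec b i ≠ 0 ∧
        ∀ w ∈ projPerp (b '' {j | j < i}) (L : Set (EuclideanSpace ℝ (Fin n))),
          w ≠ 0 → ‖gramSchmidtVec b i‖ ≤ ‖w‖) ∧
      (∀ i j : Fin n, j < i →
        |⟪b i, gramSchmidtVec b j⟫ / ⟪gramSchmidtVec b j, gramSchmidtVec b j⟫| ≤ 1 / 2) := by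
  exact exists_korkine_zolotarev_basis' L hL
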